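/- Every 1-synchronous execution consists of a sequence of blocks, each being either a single matched send immediately followed by its receive, or a single unmatched send; consequently, in a 1-synchronous trace the conflict graph has no cycles of size greater than 1 and no bad cycles. -/

import Mathlib

namespace MP

abbrev Pid := ℕ
abbrev Val := ℕ
abbrev Mid := ℕ

/-- Send and receive actions, tagged with a message identifier. -/
inductive Action : Type where
  | snd (i : Mid) (p q : Pid) (v : Val)
  | rcv (i : Mid) (q : Pid) (v : Val)
deriving DecidableEq

abbrev Exec := List Action

namespace Action
def proc : Action → Pid
  | snd _ p _ _ => p
  | rcv _ q _ => q
def dest : Action → Pid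
  | snd _ _ q _ => q
  | rcv _ q _ => q
def mid : Action → Mid
  | snd i _ _ _ => i
  | rcv i _ _ => i
def isSend : Action → Prop
  | snd _ _ _ _ => True
  | rcv _ _ _ => False
def isRecv : Action → Prop
  | snd _ _ _ _ => False
  | rcv _ _ _ => True
end Action

def sendIds (e : Exec) : List Mid :=
  e.filterMap fun a => match a with | .snd i _ _ _ => some i | _ => none
def recvIds (e : Exec) : List Mid :=
  e.filterMap fun a => match a with | .rcv i _ _ => some i | _ => none

/-- Every receive is matched by an earlier send with the same id, destination and payload. -/
def SendBeforeRecv (e : Exec) : Prop :=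
  ∀ (n : ℕ) (i : Mid) (q : Pid) (v : Val), e[n]? = some (Action.rcv i q v) →
    ∃ m < n, ∃ p : Pid, e[m]? = some (Action.snd i p q v)

def ValidTrace (e : Exec) : Prop :=
  (sendIds e).Nodup ∧ (recvIds e).Nodup ∧ SendBeforeRecv e

/-- Projection of an execution on the actions of process `p` (program order). -/
def proj (p : Pid) (e : Exec) : Exec := e.filter (fun a => a.proc == p)

/-- Two executions are trace-equivalent (same happens-before relation) iff one is a
permutation of the other preserving per-process program order (message identifiers
make the matching relation coincide). -/
def TraceEquiv (e e' : Exec) : Prop :=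
  e.Perm e' ∧ ∀ p, proj p e = proj p e'

/-- One step of the happens-before relation on positions: program order or matching. -/
def hbBase (e : Exec) (m n : ℕ) : Prop :=
  m < n ∧ ((∃ a b, e[m]? = some a ∧ e[n]? = some b ∧ a.proc = b.proc) ∨
    (∃ i p q v, e[m]? = some (.snd i p q v) ∧ e[n]? = some (.rcv i q v)))

/-- The happens-before (causal) relation of a trace. -/
def hb (e : Exec) : ℕ → ℕ → Prop := Relation.TransGen (hbBase e)

/-- Causal delivery: messages sent to the same process are received in an order
consistent with the causal order of their sends. -/
def CausalDelivery (e : Exec) : Prop :=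
  ∀ (m n n' : ℕ) (i j : Mid) (p p' q : Pid) (v v' : Val),
    e[m]? = some (Action.snd i p q v) → e[n]? = some (Action.snd j p' q v') →
    hb e m n → e[n']? = some (Action.rcv j q v') →
      ∃ m' < n', e[m']? = some (Action.rcv i q v)

inductive Kind | S | R
deriving DecidableEq

/-- The `X`-action (send or receive) of conflict-graph node `i` in execution `e`. -/
def actionAt (e : Exec) (i : Mid) : Kind → Action → Prop
  | .S, a => (∃ p q v, a = .snd i p q v) ∧ a ∈ e
  | .R, a => (∃ q v, a = .rcv i q v) ∧ a ∈ e

def CGNode (e : Exec) (i : Mid) : Prop := ∃ p q v, Action.snd i p q v ∈ e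

/-- Conflict-graph edge from node `i` to node `j` with label `XY`: the `X`-action of `i`
and the `Y`-action of `j` are by the same process, with the `X`-action of `i` first. -/
def CGEdge (e : Exec) (X Y : Kind) (i j : Mid) : Prop :=
  i ≠ j ∧ ∃ (a b : Action) (m n : ℕ), actionAt e i X a ∧ actionAt e j Y b ∧
    a.proc = b.proc ∧ m < n ∧ e[m]? = some a ∧ e[n]? = some b

/-- A (simple) cycle in the conflict graph of `e`, with labelled edges. -/
structure CGCycle (e : Exec) where
  size : ℕ
  pos : 0 < size
  node : ℕ → Mid
  lab : ℕ → Kind × Kind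
  inj : ∀ k l, k < size → l < size → node k = node l → k = l
  edge : ∀ k < size, CGEdge e (lab k).1 (lab k).2 (node k) (node ((k + 1) % size))

/-- A cycle is good if it contains no RS-labelled edge. -/
def CGCycle.Good {e : Exec} (c : CGCycle e) : Prop :=
  ∀ k < c.size, c.lab k ≠ (Kind.R, Kind.S)

def CGStep (e : Exec) (i j : Mid) : Prop := ∃ X Y, CGEdge e X Y i j
def CGReach (e : Exec) : Mid → Mid → Prop := Relation.ReflTransGen (CGStep e)
def SameSCC (e : Exec) (i j : Mid) : Prop := CGReach e i j ∧ CGReach e j i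
/-- `C` is a strongly connected component of the conflict graph of `e`. -/
def IsSCC (e : Exec) (C : Set Mid) : Prop :=
  ∃ i, CGNode e i ∧ C = {j | CGNode e j ∧ SameSCC e i j}

/-- A message passing system: one labelled transition system per process. -/
structure System where
  State : Type
  init : Pid → State
  sendTr : Pid → State → Pid → Val → State → Prop
  recvTr : Pid → State → Val → State → Prop

/-- Asynchronous configuration: local states plus per-destination FIFO buffers. -/
structure Config (S : System) where
  loc : Pid → S.State
  buf : Pid → List (Mid × Val)

def initConfig (S : System) : Config S := ⟨S.init, fun _ => []⟩

inductive Step (S : System) : Config S → Action → Config S → Prop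
  | send {c : Config S} {i : Mid} {p q : Pid} {v : Val} {l' : S.State} :
      S.sendTr p (c.loc p) q v l' →
      Step S c (.snd i p q v)
        ⟨Function.update c.loc p l', Function.update c.buf q (c.buf q ++ [(i, v)])⟩
  | recv {c : Config S} {i : Mid} {q : Pid} {v : Val} {b : List (Mid × Val)} {l' : S.State} :
      c.buf q = (i, v) :: b →
      S.recvTr q (c.loc q) v l' →
      Step S c (.rcv i q v)
        ⟨Function.update c.loc q l', Function.update c.buf q b⟩

inductive Reach (S : System) : Config S → Exec → Config S → Prop
  | nil (c) : Reach S c [] c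
  | cons {c c' c'' : Config S} {a : Action} {e : Exec} :
      Step S c a c' → Reach S c' e c'' → Reach S c (a :: e) c''

/-- Asynchronous executions (send identifiers are fresh, i.e. pairwise distinct). -/
def AsyncExec (S : System) (e : Exec) : Prop :=
  (sendIds e).Nodup ∧ ∃ c, Reach S (initConfig S) e c

/-- A `k`-exchange block: at most `k` sends followed by receives matching only sends
of the same block. -/
def Block (k : ℕ) (b : Exec) : Prop :=
  ∃ sends recvs : Exec, b = sends ++ recvs ∧
    (∀ a ∈ sends, a.isSend) ∧ (∀ a ∈ recvs, a.isRecv) ∧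
    sends.length ≤ k ∧
    (∀ i q v, Action.rcv i q v ∈ recvs → ∃ p, Action.snd i p q v ∈ sends)

/-- Decomposition into a sequence of `k`-exchange blocks. -/
inductive Blocks (k : ℕ) : Exec → Prop
  | nil : Blocks k []
  | app {b e : Exec} : Block k b → Blocks k e → Blocks k (b ++ e)

/-- A trace is `k`-synchronous if some trace-equivalent execution is a sequence of
`k`-exchanges. -/
def KSynchronous (k : ℕ) (e : Exec) : Prop :=
  ∃ e', TraceEquiv e e' ∧ SendBeforeRecv e' ∧ Blocks k e'

/-- Executions of the `k`-synchronous semantics of `S`. -/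
def SyncExec (S : System) (k : ℕ) (e : Exec) : Prop :=
  AsyncExec S e ∧ Blocks k e

/-- Every asynchronous execution of `S` is trace-equivalent to a `k`-synchronous one. -/
def KSynchronizable (S : System) (k : ℕ) : Prop :=
  ∀ e, AsyncExec S e → KSynchronous k e

/-- A borderline violation: a violation to `k`-synchronizability all of whose strict
prefixes are `k`-synchronous. -/
def Borderline (S : System) (k : ℕ) (e : Exec) : Prop :=
  AsyncExec S e ∧ ¬ KSynchronous k e ∧
  ∀ e', e' <+: e → e' ≠ e → KSynchronous k e'

def Matched (e : Exec) : Prop :=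
  ∀ i p q v, Action.snd i p q v ∈ e → Action.rcv i q v ∈ e

def HasUnmatched (e : Exec) : Prop :=
  ∃ i p q v, Action.snd i p q v ∈ e ∧ Action.rcv i q v ∉ e

def NoSend (S : System) (p : Pid) (l : S.State) : Prop := ∀ q v l', ¬ S.sendTr p l q v l'
def NoRecv (S : System) (p : Pid) (l : S.State) : Prop := ∀ v l', ¬ S.recvTr p l v l'
/-- A final local state: no outgoing transitions. -/
def FinalState (S : System) (p : Pid) (l : S.State) : Prop := NoSend S p l ∧ NoRecv S p l

/-- Deadlocked local states: some process is waiting to receive, and every process is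
in a receiving or final state (no send transitions). -/
def DeadlockLocs (S : System) (l : ∀ _ : Pid, S.State) : Prop :=
  (∃ p v l', S.recvTr p (l p) v l') ∧ ∀ q, NoSend S q (l q)

/-- `l` is a `V`-receiving state of `p`: receiving, and `V` is exactly the set of
receivable payloads. -/
def VReceiving (S : System) (p : Pid) (l : S.State) (V : Set Val) : Prop :=
  NoSend S p l ∧ (∃ v l', S.recvTr p l v l') ∧ ∀ v, (v ∈ V ↔ ∃ l', S.recvTr p l v l')

/-- Unspecified reception: some process is in a receiving state but the head of its
buffer is not receivable there. -/
def UnspecifiedReception (S : System) (c : Config S) : Prop :=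
  ∃ p V, VReceiving S p (c.loc p) V ∧ ∃ i v b, c.buf p = (i, v) :: b ∧ v ∉ V

/-- Position `n` of `e` carries an unmatched send with destination `p`. -/
def UnmatchedAt (e : Exec) (n : ℕ) (p : Pid) : Prop :=
  ∃ (i : Mid) (p' : Pid) (v : Val), e[n]? = some (Action.snd i p' p v) ∧ Action.rcv i p v ∉ e

/-- A causally minimal unmatched send with destination `p`. -/
def MinUnmatched (e : Exec) (n : ℕ) (p : Pid) : Prop :=
  UnmatchedAt e n p ∧ ∀ m, UnmatchedAt e m p → ¬ hb e m n

/-- Deterministic transition relations. -/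
def Deterministic (S : System) : Prop :=
  (∀ p l q v l₁ l₂, S.sendTr p l q v l₁ → S.sendTr p l q v l₂ → l₁ = l₂) ∧
  (∀ p l v l₁ l₂, S.recvTr p l v l₁ → S.recvTr p l v l₂ → l₁ = l₂)

/-- No process performs more than `K` consecutive sends. -/
def SendBoundedE (K : ℕ) (e : Exec) : Prop :=
  ∀ p l, l <:+: proj p e → (∀ a ∈ l, a.isSend) → l.length ≤ K
/-- No process performs more than `K` consecutive receives. -/
def RecvBoundedE (K : ℕ) (e : Exec) : Prop :=
  ∀ p l, l <:+: proj p e → (∀ a ∈ l, a.isRecv) → l.length ≤ K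
/-- Flow-bounded system with bound `K`. -/
def FlowBounded (S : System) (K : ℕ) : Prop :=
  ∀ e, AsyncExec S e → SendBoundedE K e ∧ RecvBoundedE K e

/-- A finite-state message passing system. -/
structure FinSystem where
  nS : ℕ
  nP : ℕ
  nV : ℕ
  init : Fin nP → Fin nS
  sendTr : Fin nP → Fin nS → Fin nP → Fin nV → Fin nS → Bool
  recvTr : Fin nP → Fin nS → Fin nV → Fin nS → Bool

def FinSystem.toSystem (F : FinSystem) : System where
  State := Option (Fin F.nS)
  init p := if h : p < F.nP then some (F.init ⟨p, h⟩) else none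
  sendTr p l q v l' :=
    ∃ (hp : p < F.nP) (hq : q < F.nP) (hv : v < F.nV) (s s' : Fin F.nS),
      l = some s ∧ l' = some s' ∧ F.sendTr ⟨p, hp⟩ s ⟨q, hq⟩ ⟨v, hv⟩ s' = true
  recvTr p l v l' :=
    ∃ (hp : p < F.nP) (hv : v < F.nV) (s s' : Fin F.nS),
      l = some s ∧ l' = some s' ∧ F.recvTr ⟨p, hp⟩ s ⟨v, hv⟩ s' = true

/-- Decomposition into blocks that are either a matched send immediately followed by
its receive, or a single unmatched send. -/
inductive OneBlocks : Exec → Prop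
  | nil : OneBlocks []
  | matched {e : Exec} {i : Mid} {p q : Pid} {v : Val} :
      OneBlocks e → OneBlocks (Action.snd i p q v :: Action.rcv i q v :: e)
  | unmatched {e : Exec} {i : Mid} {p q : Pid} {v : Val} :
      Action.rcv i q v ∉ e → OneBlocks e → OneBlocks (Action.snd i p q v :: e)

/-! ### Auxiliary definitions and lemmas -/

/-- Ids of receives with destination `q`. -/
def rIdsQ (q : Pid) (e : Exec) : List Mid :=
  e.filterMap fun a => match a with
    | .rcv i q' _ => if q' = q then some i else none
    | _ => none

/-- Ids of sends with destination `q`. -/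
def sIdsQ (q : Pid) (e : Exec) : List Mid :=
  e.filterMap fun a => match a with
    | .snd i _ q' _ => if q' = q then some i else none
    | _ => none

lemma sIdsQ_sublist (q : Pid) (e : Exec) : (sIdsQ q e).Sublist (sendIds e) := by
  induction e with
  | nil => simp [sIdsQ, sendIds]
  | cons a e ih =>
    cases a with
    | snd i p q' v =>
      by_cases h : q' = q
      · simpa [sIdsQ, sendIds, List.filterMap_cons, h] using ih.cons₂ i
      · simpa [sIdsQ, sendIds, List.filterMap_cons, h] using ih.cons i
    | rcv i q' v => simpa [sIdsQ, sendIds, List.filterMap_cons] using ih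

lemma sendIds_append (l l' : Exec) : sendIds (l ++ l') = sendIds l ++ sendIds l' :=
  List.filterMap_append

lemma rIdsQ_append (q : Pid) (l l' : Exec) : rIdsQ q (l ++ l') = rIdsQ q l ++ rIdsQ q l' :=
  List.filterMap_append

lemma reach_buf_eq {S : System} {c c' : Config S} {e : Exec} (h : Reach S c e c') (q : Pid) :
    (c.buf q).map Prod.fst ++ sIdsQ q e = rIdsQ q e ++ (c'.buf q).map Prod.fst := by
  induction h with
  | nil c => simp [sIdsQ, rIdsQ]
  | cons st rest ih =>
    cases st with
    | @send i p q0 v l' hs =>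
      by_cases hq : q0 = q
      · subst hq
        simp only [Function.update_self] at ih
        simp only [sIdsQ, rIdsQ, List.filterMap_cons, if_pos rfl] at ih ⊢
        rw [← ih]
        simp
      · simp only [Function.update_of_ne (Ne.symm hq)] at ih
        simpa only [sIdsQ, rIdsQ, List.filterMap_cons, if_neg hq] using ih
    | @recv i q0 v b l' hb hr =>
      by_cases hq : q0 = q
      · subst hq
        simp only [Function.update_self] at ih
        simp only [sIdsQ, rIdsQ, List.filterMap_cons, if_pos rfl] at ih ⊢
        rw [hb]
        simp only [if_true, List.map_cons, List.cons_append]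
        rw [ih]
      · simp only [Function.update_of_ne (Ne.symm hq)] at ih
        simpa only [sIdsQ, rIdsQ, List.filterMap_cons, if_neg hq] using ih

lemma count_rIdsQ_le {S : System} {e : Exec} (he : AsyncExec S e) (i : Mid) (q : Pid) :
    (rIdsQ q e).count i ≤ 1 := by
  obtain ⟨hnd, c, hr⟩ := he
  have h := reach_buf_eq hr q
  simp only [initConfig, List.map_nil, List.nil_append] at h
  have hpre : rIdsQ q e <+: sIdsQ q e := ⟨_, h.symm⟩
  calc (rIdsQ q e).count i ≤ (sIdsQ q e).count i := hpre.count_le i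
    _ ≤ (sendIds e).count i := (sIdsQ_sublist q e).count_le i
    _ ≤ 1 := List.nodup_iff_count_le_one.mp hnd i

lemma mem_sendIds_of_mem {e : Exec} {i : Mid} {p q : Pid} {v : Val}
    (h : Action.snd i p q v ∈ e) : i ∈ sendIds e :=
  List.mem_filterMap.mpr ⟨_, h, rfl⟩

lemma blocks_recv_matched {k : ℕ} {e : Exec} (h : Blocks k e) :
    ∀ i q v, Action.rcv i q v ∈ e → ∃ p, Action.snd i p q v ∈ e := by
  induction h with
  | nil => simp
  | @app b e' hb hbl ih =>
    intro i q v hm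
    rcases List.mem_append.mp hm with hm | hm
    · obtain ⟨sends, recvs, rfl, hs, hr, hlen, hmatch⟩ := hb
      rcases List.mem_append.mp hm with hm | hm
      · exact absurd (hs _ hm) (by simp [Action.isSend])
      · obtain ⟨p, hp⟩ := hmatch i q v hm
        exact ⟨p, List.mem_append_left _ (List.mem_append_left _ hp)⟩
    · obtain ⟨p, hp⟩ := ih i q v hm
      exact ⟨p, List.mem_append_right _ hp⟩

lemma blocks_one_oneBlocks {e : Exec} (h : Blocks 1 e) :
    (sendIds e).Nodup → (∀ i q, (rIdsQ q e).count i ≤ 1) → OneBlocks e := by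
  induction h with
  | nil => intro _ _; exact OneBlocks.nil
  | @app b e' hb hbl ih =>
    intro hnd hcnt
    obtain ⟨sends, recvs, rfl, hs, hr, hlen, hmatch⟩ := hb
    have hnd' : (sendIds e').Nodup := by
      refine List.Sublist.nodup ?_ hnd
      rw [sendIds_append]
      exact List.sublist_append_right _ _
    have hcnt' : ∀ i q, (rIdsQ q e').count i ≤ 1 := by
      intro i q
      refine le_trans (List.Sublist.count_le i ?_) (hcnt i q)
      rw [rIdsQ_append]
      exact List.sublist_append_right _ _
    have ihe := ih hnd' hcnt'
    cases sends with
    | nil =>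
      have hrnil : recvs = [] := by
        cases recvs with
        | nil => rfl
        | cons r rs =>
          have hrr := hr r (List.mem_cons_self)
          cases r with
          | snd i p q v => exact absurd hrr (by simp [Action.isRecv])
          | rcv i q v =>
            obtain ⟨p, hp⟩ := hmatch i q v (List.mem_cons_self)
            exact absurd hp (List.not_mem_nil)
      subst hrnil
      simpa using ihe
    | cons a as =>
      have has : as = [] := by
        have hl := hlen
        simp only [List.length_cons] at hl
        exact List.length_eq_zero_iff.mp (by omega)
      subst has
      cases a with
      | rcv i q v => exact absurd (hs _ (List.mem_cons_self)) (by simp [Action.isSend])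
      | snd i p q v =>
        have hrec : ∀ r ∈ recvs, r = Action.rcv i q v := by
          intro r hrm
          have hrr := hr r hrm
          cases r with
          | snd i' p' q' v' => exact absurd hrr (by simp [Action.isRecv])
          | rcv i' q' v' =>
            obtain ⟨p', hp'⟩ := hmatch i' q' v' hrm
            simp only [List.mem_singleton, Action.snd.injEq] at hp'
            obtain ⟨rfl, -, rfl, rfl⟩ := hp'
            rfl
        cases recvs with
        | nil =>
          have hnotin : Action.rcv i q v ∉ e' := by
            intro hmem
            obtain ⟨p', hp'⟩ := blocks_recv_matched hbl i q v hmem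
            have : i ∉ sendIds e' := by
              have : sendIds (([Action.snd i p q v] ++ []) ++ e')
                  = i :: sendIds e' := by
                simp [sendIds, List.filterMap_append, List.filterMap_cons]
              rw [this] at hnd
              exact (List.nodup_cons.mp hnd).1
            exact this (mem_sendIds_of_mem hp')
          simpa using OneBlocks.unmatched hnotin ihe
        | cons r rs =>
          have hrq := hrec r (List.mem_cons_self)
          subst hrq
          cases rs with
          | nil => simpa using OneBlocks.matched ihe
          | cons r2 rs2 =>
            have hr2 := hrec r2 (by simp)
            subst hr2
            exfalso
            have h2 : 2 ≤ (rIdsQ q (([Action.snd i p q v] ++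
                (Action.rcv i q v :: Action.rcv i q v :: rs2)) ++ e')).count i := by
              simp [rIdsQ, List.filterMap_append, List.filterMap_cons, List.count_cons]
            have := hcnt i q
            omega

lemma oneBlocks_recv_matched {e : Exec} (h : OneBlocks e) :
    ∀ i q v, Action.rcv i q v ∈ e → ∃ p, Action.snd i p q v ∈ e := by
  induction h with
  | nil => simp
  | @matched e' i0 p0 q0 v0 h ih =>
    intro i q v hm
    simp only [List.mem_cons] at hm
    rcases hm with hm | hm | hm
    · exact absurd hm (by simp)
    · simp only [Action.rcv.injEq] at hm
      obtain ⟨rfl, rfl, rfl⟩ := hm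
      exact ⟨p0, by simp⟩
    · obtain ⟨p, hp⟩ := ih i q v hm
      exact ⟨p, by simp [hp]⟩
  | @unmatched e' i0 p0 q0 v0 hn h ih =>
    intro i q v hm
    simp only [List.mem_cons] at hm
    rcases hm with hm | hm
    · exact absurd hm (by simp)
    · obtain ⟨p, hp⟩ := ih i q v hm
      exact ⟨p, by simp [hp]⟩

lemma pair_sublist {α : Type*} : ∀ (L : List α) {m n : ℕ} {x y : α}, m < n →
    L[m]? = some x → L[n]? = some y → ([x, y] : List α).Sublist L := by
  intro L
  induction L with
  | nil => intro m n x y _ h; simp at h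
  | cons a L ih =>
    intro m n x y hmn hx hy
    cases m with
    | zero =>
      simp only [List.getElem?_cons_zero, Option.some.injEq] at hx
      subst hx
      cases n with
      | zero => omega
      | succ n =>
        have hy' : L[n]? = some y := by simpa using hy
        have hmem : y ∈ L := List.mem_of_getElem? hy'
        exact (List.singleton_sublist.mpr hmem).cons₂ a
    | succ m =>
      cases n with
      | zero => omega
      | succ n =>
        exact (ih (m := m) (n := n) (by omega) (by simpa using hx) (by simpa using hy)).cons a

lemma pair_strip {i j x : Mid} {M : List Mid} (h : ([i, j] : List Mid).Sublist (x :: M)) (hix : i ≠ x) :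
    ([i, j] : List Mid).Sublist M := by
  rcases List.sublist_cons_iff.mp h with h | ⟨r, hr, -⟩
  · exact h
  · injection hr with h1 _
    exact absurd h1 hix

lemma mid_notin_of_nodup {e : Exec} (h : OneBlocks e) {i0 : Mid}
    (hni : i0 ∉ sendIds e) : i0 ∉ e.map Action.mid := by
  intro hmem
  obtain ⟨a, ha, hamid⟩ := List.mem_map.mp hmem
  cases a with
  | snd i p q v =>
    cases hamid
    exact hni (mem_sendIds_of_mem ha)
  | rcv i q v =>
    cases hamid
    obtain ⟨p, hp⟩ := oneBlocks_recv_matched h i q v ha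
    exact hni (mem_sendIds_of_mem hp)

lemma oneBlocks_indexOf_lt {e : Exec} (h : OneBlocks e) (hnd : (sendIds e).Nodup) :
    ∀ i j : Mid, i ≠ j → ([i, j] : List Mid).Sublist (e.map Action.mid) →
      (e.map Action.mid).idxOf i < (e.map Action.mid).idxOf j := by
  induction h with
  | nil => intro i j _ hs; simp at hs
  | @matched e' i0 p q v h ih =>
    intro i j hij hs
    have hnd0 : sendIds (Action.snd i0 p q v :: Action.rcv i0 q v :: e')
        = i0 :: sendIds e' := by simp [sendIds, List.filterMap_cons]
    rw [hnd0] at hnd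
    have hni : i0 ∉ sendIds e' := (List.nodup_cons.mp hnd).1
    have hnd' : (sendIds e').Nodup := (List.nodup_cons.mp hnd).2
    have hi0 : i0 ∉ e'.map Action.mid := mid_notin_of_nodup h hni
    have hM : (Action.snd i0 p q v :: Action.rcv i0 q v :: e').map Action.mid
        = i0 :: i0 :: e'.map Action.mid := by simp [Action.mid]
    rw [hM] at hs ⊢
    by_cases hii : i = i0
    · have hji : j ≠ i0 := by rw [← hii]; exact Ne.symm hij
      rw [hii, List.idxOf_cons_self, List.idxOf_cons_ne _ (Ne.symm hji)]
      exact Nat.succ_pos _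
    · have hs1 : ([i, j] : List Mid).Sublist (i0 :: e'.map Action.mid) := pair_strip hs hii
      have hs2 : ([i, j] : List Mid).Sublist (e'.map Action.mid) := pair_strip hs1 hii
      have hji : j ≠ i0 := by
        rintro rfl
        exact hi0 (hs2.subset (by simp))
      have hlt := ih hnd' i j hij hs2
      rw [List.idxOf_cons_ne _ (Ne.symm hii), List.idxOf_cons_ne _ (Ne.symm hii),
        List.idxOf_cons_ne _ (Ne.symm hji), List.idxOf_cons_ne _ (Ne.symm hji)]
      omega
  | @unmatched e' i0 p q v hnm h ih =>
    intro i j hij hs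
    have hnd0 : sendIds (Action.snd i0 p q v :: e') = i0 :: sendIds e' := by
      simp [sendIds, List.filterMap_cons]
    rw [hnd0] at hnd
    have hni : i0 ∉ sendIds e' := (List.nodup_cons.mp hnd).1
    have hnd' : (sendIds e').Nodup := (List.nodup_cons.mp hnd).2
    have hi0 : i0 ∉ e'.map Action.mid := mid_notin_of_nodup h hni
    have hM : (Action.snd i0 p q v :: e').map Action.mid
        = i0 :: e'.map Action.mid := by simp [Action.mid]
    rw [hM] at hs ⊢
    by_cases hii : i = i0
    · have hji : j ≠ i0 := by rw [← hii]; exact Ne.symm hij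
      rw [hii, List.idxOf_cons_self, List.idxOf_cons_ne _ (Ne.symm hji)]
      exact Nat.succ_pos _
    · have hs2 : ([i, j] : List Mid).Sublist (e'.map Action.mid) := pair_strip hs hii
      have hji : j ≠ i0 := by
        rintro rfl
        exact hi0 (hs2.subset (by simp))
      have hlt := ih hnd' i j hij hs2
      rw [List.idxOf_cons_ne _ (Ne.symm hii), List.idxOf_cons_ne _ (Ne.symm hji)]
      omega

lemma actionAt_mid {e : Exec} {i : Mid} {X : Kind} {a : Action}
    (h : actionAt e i X a) : a.mid = i := by
  cases X with
  | S => obtain ⟨⟨p, q, v, rfl⟩, -⟩ := h; rfl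
  | R => obtain ⟨⟨q, v, rfl⟩, -⟩ := h; rfl

lemma no_cycle {e : Exec} (h : OneBlocks e) (hnd : (sendIds e).Nodup)
    (c : CGCycle e) : False := by
  set M := e.map Action.mid with hM
  have key : ∀ k < c.size,
      M.idxOf (c.node k) < M.idxOf (c.node ((k + 1) % c.size)) := by
    intro k hk
    obtain ⟨hne, a, b, m, n, ha, hb, hproc, hmn, hma, hnb⟩ := c.edge k hk
    have hsub : ([c.node k, c.node ((k + 1) % c.size)] : List Mid).Sublist M := by
      refine pair_sublist M hmn ?_ ?_
      · rw [hM, List.getElem?_map, hma]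
        simp [actionAt_mid ha]
      · rw [hM, List.getElem?_map, hnb]
        simp [actionAt_mid hb]
    exact oneBlocks_indexOf_lt h hnd _ _ hne hsub
  have mono : ∀ k, k < c.size → M.idxOf (c.node 0) ≤ M.idxOf (c.node k) := by
    intro k
    induction k with
    | zero => intro _; exact le_refl _
    | succ k ih =>
      intro hk
      have hk' : k < c.size := Nat.lt_of_succ_lt hk
      have hkey := key k hk'
      rw [Nat.mod_eq_of_lt hk] at hkey
      exact le_trans (ih hk') (le_of_lt hkey)
  have hpos := c.pos
  have hlast := key (c.size - 1) (by omega)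
  have hmod : (c.size - 1 + 1) % c.size = 0 := by
    rw [Nat.sub_add_cancel hpos, Nat.mod_self]
  rw [hmod] at hlast
  exact absurd (mono (c.size - 1) (by omega)) (not_le.mpr hlast)

/-- Every 1-synchronous execution is a sequence of blocks, each a matched send
immediately followed by its receive or a single unmatched send; consequently its
conflict graph has only good cycles of size at most 1. -/
theorem oneSynchronous_structure (S : System) (e : Exec)
    (he : AsyncExec S e) (hbl : Blocks 1 e) :
    OneBlocks e ∧ ∀ c : CGCycle e, c.Good ∧ c.size ≤ 1 := by
  have hnd : (sendIds e).Nodup := he.1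
  have hcnt : ∀ i q, (rIdsQ q e).count i ≤ 1 := fun i q => count_rIdsQ_le he i q
  have h1 : OneBlocks e := blocks_one_oneBlocks hbl hnd hcnt
  exact ⟨h1, fun c => (no_cycle h1 hnd c).elim⟩

end MP
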